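/- Let (τ_i)_{i∈ℕ} be a sequence of trees labelled by judgments c ⇒ u over a big-step semantics (C, R, 𝓡), with u ∈ R ∪ {?}, which is increasing with respect to the order ⊑ (i.e. τ_n ⊑ τ_{n+1} for all n). Then the sequence has a least upper bound τ = ⊔ τ_n with respect to ⊑. -/

import Mathlib

namespace BigStepMeta

universe u

/-- A judgment `c ⇒ r`: a configuration together with a result. -/
structure Judg (C : Type u) where
  conf : C
  res  : C

/-- A big-step rule: a conclusion configuration plus a nonempty finite list of premises.
The last premise is the continuation; the conclusion judgment is `concl ⇒ (last premise).res`. -/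
structure Rule (C : Type u) where
  concl : C
  premises : List (Judg C)
  ne : premises ≠ []

/-- The last premise (continuation) of a rule. -/
def Rule.lastJ {C : Type u} (ρ : Rule C) : Judg C := ρ.premises.getLast ρ.ne

/-- A big-step semantics `(C, R, 𝓡)`: configurations `C`, results `R ⊆ C`, rules `𝓡`. -/
structure BigStep (C : Type u) where
  R : Set C
  Rules : Set (Rule C)
  concl_not_res : ∀ ρ ∈ Rules, ρ.concl ∉ R
  prem_res : ∀ ρ ∈ Rules, ∀ j ∈ ρ.premises, j.res ∈ R

variable {C : Type u}

/-- Condition BP: the number of premises of rules is bounded. -/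
def BigStep.BP (S : BigStep C) : Prop :=
  ∃ b : ℕ, ∀ ρ ∈ S.Rules, ρ.premises.length ≤ b

/-- Inductive derivability `⊢_𝓡 c ⇒ r`: there is a finite proof tree.
For each result `r ∈ R` there is an implicit axiom `r ⇒ r`. -/
inductive Derives (S : BigStep C) : C → C → Prop
  | ax {r : C} : r ∈ S.R → Derives S r r
  | rule {ρ : Rule C} : ρ ∈ S.Rules →
      (∀ j ∈ ρ.premises, Derives S j.conf j.res) →
      Derives S ρ.concl ρ.lastJ.res

/-! ## Traces -/

/-- A finite or infinite trace of configurations. -/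
inductive Trace (C : Type u) where
  | fin : List C → Trace C
  | inf : (ℕ → C) → Trace C

/-- Concatenation of a finite list with an infinite sequence. -/
def appendInf (l : List C) (f : ℕ → C) : ℕ → C :=
  fun n => if h : n < l.length then l.get ⟨n, h⟩ else f (n - l.length)

/-- The finite trace `t_k · R(j_k)` associated to a premise and a chosen finite trace. -/
def finPart (p : Judg C × List C) : List C := p.2 ++ [p.1.res]

/-- The rule instances of the trace semantics `𝓡^tr`: a conclusion `c ⇒ t`
together with its list of premises. -/
inductive TrRule (S : BigStep C) : C → Trace C → List (C × Trace C) → Prop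
  | ax {r : C} : r ∈ S.R → TrRule S r (.fin [r]) []
  | intro {ρ : Rule C} {ts : List (List C)} :
      ρ ∈ S.Rules → ts.length = ρ.premises.length →
      TrRule S ρ.concl
        (.fin (ρ.concl :: ((ρ.premises.zip ts).map finPart).flatten))
        ((ρ.premises.zip ts).map (fun p => (p.1.conf, Trace.fin (finPart p))))
  | div {ρ : Rule C} {pre rest : List (Judg C)} {j : Judg C} {ts : List (List C)} {f : ℕ → C} :
      ρ ∈ S.Rules → ρ.premises = pre ++ j :: rest →
      ts.length = pre.length →
      TrRule S ρ.concl
        (.inf (appendInf (ρ.concl :: ((pre.zip ts).map finPart).flatten) f))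
        (((pre.zip ts).map (fun p => (p.1.conf, Trace.fin (finPart p)))) ++
          [(j.conf, Trace.inf f)])

/-- `⊢_{𝓡^tr} c ⇒ t` by a finite derivation (inductive interpretation of `𝓡^tr`). -/
inductive TrDerivesFin (S : BigStep C) : C → Trace C → Prop
  | step {c : C} {t : Trace C} {prems : List (C × Trace C)} :
      TrRule S c t prems →
      (∀ p ∈ prems, TrDerivesFin S p.1 p.2) →
      TrDerivesFin S c t

/-- `⊢_{𝓡^tr} c ⇒ t`: coinductive interpretation of `𝓡^tr`, i.e. existence of a possibly
infinite proof tree, expressed as membership in some backward-closed (consistent) relation. -/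
def TrDerives (S : BigStep C) (c : C) (t : Trace C) : Prop :=
  ∃ X : C → Trace C → Prop,
    (∀ c' t', X c' t' → ∃ prems, TrRule S c' t' prems ∧ ∀ p ∈ prems, X p.1 p.2) ∧
    X c t

/-! ## Wrong -/

/-- There is a rule with conclusion configuration `c`, first premises `pre`, whose next
premise has configuration `c'` and result `r` (i.e. a rule `ρ' ∼ᵢ ρ` with `R(ρ', i) = r`). -/
def HasContinuation (S : BigStep C) (c : C) (pre : List (Judg C)) (c' r : C) : Prop :=
  ∃ ρ' ∈ S.Rules, ∃ j' : Judg C, ∃ rest' : List (Judg C),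
    ρ'.premises = pre ++ j' :: rest' ∧ ρ'.concl = c ∧ j'.conf = c' ∧ j'.res = r

/-- Derivability in the wrong semantics `𝓡^wr`; `none` plays the role of `wrong`. -/
inductive DerivesW (S : BigStep C) : C → Option C → Prop
  | ax {r : C} : r ∈ S.R → DerivesW S r (some r)
  | rule {ρ : Rule C} : ρ ∈ S.Rules →
      (∀ j ∈ ρ.premises, DerivesW S j.conf (some j.res)) →
      DerivesW S ρ.concl (some ρ.lastJ.res)
  | wrong_intro {ρ : Rule C} {pre rest : List (Judg C)} {j : Judg C} {r : C} :
      ρ ∈ S.Rules → ρ.premises = pre ++ j :: rest → r ∈ S.R →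
      ¬ HasContinuation S ρ.concl pre j.conf r →
      (∀ j' ∈ pre, DerivesW S j'.conf (some j'.res)) →
      DerivesW S j.conf (some r) →
      DerivesW S ρ.concl none
  | wrong_ax {c : C} : c ∉ S.R → (¬ ∃ ρ ∈ S.Rules, ρ.concl = c) →
      DerivesW S c none
  | wrong_prop {ρ : Rule C} {pre rest : List (Judg C)} {j : Judg C} :
      ρ ∈ S.Rules → ρ.premises = pre ++ j :: rest →
      (∀ j' ∈ pre, DerivesW S j'.conf (some j'.res)) →
      DerivesW S j.conf none →
      DerivesW S ρ.concl none

/-! ## Indexed predicates and soundness conditions -/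

variable {I : Type u}

/-- `c ∈ Π`, i.e. `c ∈ Π_ι` for some index `ι`. -/
def InPred (P : I → Set C) (c : C) : Prop := ∃ i : I, c ∈ P i

/-- Condition S1 (local preservation). -/
def LocalPres (S : BigStep C) (P : I → Set C) : Prop :=
  ∀ ρ ∈ S.Rules, ∀ i : I, ρ.concl ∈ P i →
    ∃ f : ℕ → I, f (ρ.premises.length - 1) = i ∧
      ∀ (k : ℕ) (hk : k < ρ.premises.length),
        (∀ (h : ℕ) (hh : h < k), (ρ.premises.get ⟨h, hh.trans hk⟩).res ∈ P (f h)) →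
        (ρ.premises.get ⟨k, hk⟩).conf ∈ P (f k)

/-- Condition S2 (∃-progress). -/
def ExProgress (S : BigStep C) (P : I → Set C) : Prop :=
  ∀ c : C, InPred P c → c ∉ S.R → ∃ ρ ∈ S.Rules, ρ.concl = c

/-- Condition S3 (∀-progress). -/
def AllProgress (S : BigStep C) (P : I → Set C) : Prop :=
  ∀ ρ ∈ S.Rules, InPred P ρ.concl →
    ∀ (pre : List (Judg C)) (j : Judg C) (rest : List (Judg C)),
      ρ.premises = pre ++ j :: rest →
      (∀ j' ∈ pre, Derives S j'.conf j'.res) →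
      ∀ r ∈ S.R, Derives S j.conf r →
      HasContinuation S ρ.concl pre j.conf r

/-- Condition S4 (progress-may). -/
def ProgressMay (S : BigStep C) (P : I → Set C) : Prop :=
  ∀ c : C, InPred P c → c ∉ S.R →
    ∃ ρ ∈ S.Rules, ρ.concl = c ∧
      ∀ (pre : List (Judg C)) (j : Judg C) (rest : List (Judg C)),
        ρ.premises = pre ++ j :: rest →
        (∀ j' ∈ pre, Derives S j'.conf j'.res) →
        ¬ Derives S j.conf j.res →
        ¬ ∃ r : C, Derives S j.conf r

/-! ## Partial evaluation: the inference system `𝓡^?` -/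

/-- The rule instances of the partial-evaluation semantics `𝓡^?`; `none` plays the role
of the unknown result `?`. -/
inductive URule (S : BigStep C) : C → Option C → List (C × Option C) → Prop
  | ax {r : C} : r ∈ S.R → URule S r (some r) []
  | rule {ρ : Rule C} : ρ ∈ S.Rules →
      URule S ρ.concl (some ρ.lastJ.res) (ρ.premises.map (fun j => (j.conf, some j.res)))
  | unk_ax {c : C} : URule S c none []
  | unk {ρ : Rule C} {pre rest : List (Judg C)} {j : Judg C} {r : C} :
      ρ ∈ S.Rules → ρ.premises = pre ++ j :: rest → r ∈ S.R →
      URule S ρ.concl none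
        (pre.map (fun j' => (j'.conf, some j'.res)) ++ [(j.conf, some r)])
  | prop {ρ : Rule C} {pre rest : List (Judg C)} {j : Judg C} :
      ρ ∈ S.Rules → ρ.premises = pre ++ j :: rest →
      URule S ρ.concl none
        (pre.map (fun j' => (j'.conf, some j'.res)) ++ [(j.conf, none)])

/-! ## Possibly infinite trees as partial functions -/

/-- A (possibly infinite) tree labelled by judgments `c ⇒ u`, `u ∈ R ∪ {?}`, given as a
partial function on addresses (lists of positive naturals), with nonempty domain closed
under parents and left siblings. -/
structure PTree (C : Type u) where
  label : List ℕ+ → Option (C × Option C)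
  root_def : label [] ≠ none
  closed : ∀ (α : List ℕ+) (n : ℕ+), label (α ++ [n]) ≠ none → label α ≠ none
  siblings : ∀ (α : List ℕ+) (n k : ℕ+), k ≤ n →
    label (α ++ [n]) ≠ none → label (α ++ [k]) ≠ none

/-- `τ` is a proof tree in `𝓡^?`: at each node, the children are exactly the premises
of a rule of `𝓡^?` with the node's judgment as conclusion. -/
def PTree.IsProofTree (S : BigStep C) (τ : PTree C) : Prop :=
  ∀ (α : List ℕ+) (p : C × Option C), τ.label α = some p →
    ∃ prems : List (C × Option C), URule S p.1 p.2 prems ∧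
      ∀ n : ℕ+, τ.label (α ++ [n]) = prems[(n : ℕ) - 1]?

/-- The order `τ ⊑ τ'` on trees: larger domain, same configurations, and equal subtrees
at nodes whose result is already known (in `R`). -/
def PTree.LE (τ τ' : PTree C) : Prop :=
  ∀ (α : List ℕ+) (p : C × Option C), τ.label α = some p →
    ∃ p' : C × Option C, τ'.label α = some p' ∧ p.1 = p'.1 ∧
      (p.2 ≠ none → ∀ β : List ℕ+, τ.label (α ++ β) = τ'.label (α ++ β))

/-- A tree is finite if its domain is finite. -/
def PTree.Finite (τ : PTree C) : Prop := {α : List ℕ+ | τ.label α ≠ none}.Finite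

/-- A (typically infinite) proof tree is well-formed if at every level there is a node
labelled by an incomplete judgment, and subtrees rooted at complete judgments are finite. -/
def PTree.WellFormed (τ : PTree C) : Prop :=
  (∀ n : ℕ, ∃ (α : List ℕ+) (c : C), α.length = n ∧ τ.label α = some (c, none)) ∧
  (∀ (α : List ℕ+) (c r : C), τ.label α = some (c, some r) →
    {β : List ℕ+ | τ.label (α ++ β) ≠ none}.Finite)

/-! ## Finite proof trees and the reduction relation -/

/-- Finite trees labelled by judgments `c ⇒ u`, `u ∈ R ∪ {?}` (with `none` playing `?`). -/
inductive FTree (C : Type u) where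
  | node : C → Option C → List (FTree C) → FTree C

/-- The judgment at the root of a finite tree. -/
def FTree.judg : FTree C → C × Option C
  | .node c u _ => (c, u)

/-- `τ` is a finite proof tree in the partial-evaluation semantics `𝓡^?`. -/
inductive IsFPT (S : BigStep C) : FTree C → Prop
  | mk {c : C} {u : Option C} {l : List (FTree C)} :
      URule S c u (l.map FTree.judg) →
      (∀ τ ∈ l, IsFPT S τ) →
      IsFPT S (.node c u l)

/-- A finite proof tree is complete if all its judgments have results in `R`. -/
inductive FTree.Complete (S : BigStep C) : FTree C → Prop
  | mk {c : C} {r : C} {l : List (FTree C)} :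
      r ∈ S.R →
      (∀ τ ∈ l, FTree.Complete S τ) →
      FTree.Complete S (.node c (some r) l)

/-- The order `τ ⊑ τ'` on finite trees. -/
inductive FTreeLE : FTree C → FTree C → Prop
  | done {c r : C} {l : List (FTree C)} :
      FTreeLE (.node c (some r) l) (.node c (some r) l)
  | step {c : C} {u' : Option C} {l l₁ l₂ : List (FTree C)} :
      l.length = l₁.length →
      (∀ p ∈ l.zip l₁, FTreeLE p.1 p.2) →
      FTreeLE (.node c none l) (.node c u' (l₁ ++ l₂))

/-- The one-step reduction relation `⇝` on finite proof trees in `𝓡^?`. -/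
inductive Red (S : BigStep C) : FTree C → FTree C → Prop
  /-- The axiom `r ⇒ ?` (with `r ∈ R`) steps to the axiom `r ⇒ r`. -/
  | res {r : C} : r ∈ S.R → Red S (.node r none []) (.node r (some r) [])
  /-- The axiom `c ⇒ ?` steps, for a rule `ρ` with conclusion configuration `c`,
  to the tree applying `prop(ρ,1,?)` to the leaf `c' ⇒ ?`, `c'` the first premise
  configuration of `ρ`. -/
  | start {ρ : Rule C} {j : Judg C} {rest : List (Judg C)} :
      ρ ∈ S.Rules → ρ.premises = j :: rest →
      Red S (.node ρ.concl none []) (.node ρ.concl none [.node j.conf none []])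
  /-- A tree with root `c ⇒ ?` whose children are the first `i` premises of some
  `ρ' ∈ 𝓡` (with `#ρ' = i`, last premise result `r`) steps to the same tree with
  root `c ⇒ r`. -/
  | complete {ρ' : Rule C} {pre : List (Judg C)} {j' : Judg C} {l : List (FTree C)} :
      ρ' ∈ S.Rules → ρ'.premises = pre ++ [j'] →
      l.map FTree.judg = pre.map (fun j => (j.conf, some j.res)) ++ [(j'.conf, some j'.res)] →
      Red S (.node ρ'.concl none l) (.node ρ'.concl (some j'.res) l)
  /-- A tree with root `c ⇒ ?` whose children are the first `i` premises of some
  `ρ' ∈ 𝓡` having an `(i+1)`-th premise steps by adding the leaf for that premise's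
  configuration. -/
  | next {ρ' : Rule C} {pre rest : List (Judg C)} {j' j'' : Judg C} {l : List (FTree C)} :
      ρ' ∈ S.Rules → ρ'.premises = pre ++ j' :: j'' :: rest →
      l.map FTree.judg = pre.map (fun j => (j.conf, some j.res)) ++ [(j'.conf, some j'.res)] →
      Red S (.node ρ'.concl none l) (.node ρ'.concl none (l ++ [.node j''.conf none []]))
  /-- Propagation: a step of the last child is propagated. -/
  | inner {c : C} {l : List (FTree C)} {τ τ' : FTree C} :
      Red S τ τ' →
      Red S (.node c none (l ++ [τ])) (.node c none (l ++ [τ']))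


/-! ### Auxiliary material for statement 11 -/

section LimitAux

variable {C : Type u}

theorem PTree.LE.refl' (τ : PTree C) : PTree.LE τ τ :=
  fun _ p h => ⟨p, h, rfl, fun _ _ => rfl⟩

theorem PTree.LE.trans' {a b c : PTree C} (h1 : a.LE b) (h2 : b.LE c) : a.LE c := by
  intro α p hp
  obtain ⟨p', hb, hc1, hs1⟩ := h1 α p hp
  obtain ⟨p'', hcL, hc2, hs2⟩ := h2 α p' hb
  refine ⟨p'', hcL, hc1.trans hc2, fun hne β => ?_⟩
  have hpp' : p = p' := by
    have h0 := hs1 hne []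
    rw [List.append_nil] at h0
    rw [hp, hb] at h0
    exact Option.some_inj.mp h0
  rw [hs1 hne β, hs2 (hpp' ▸ hne) β]

variable (τs : ℕ → PTree C)

open Classical in
/-- The label function of the limit tree. -/
noncomputable def limLabel (α : List ℕ+) : Option (C × Option C) :=
  if h : ∃ n p, (τs n).label α = some p ∧ p.2 ≠ none then some h.choose_spec.choose
  else if h2 : ∃ n p, (τs n).label α = some p then some (h2.choose_spec.choose.1, none)
  else none

variable (hmono : ∀ n : ℕ, PTree.LE (τs n) (τs (n + 1)))

include hmono

theorem persist {m n : ℕ} (hmn : m ≤ n) : PTree.LE (τs m) (τs n) := by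
  induction n, hmn using Nat.le_induction with
  | base => exact PTree.LE.refl' _
  | succ n hn ih => exact ih.trans' (hmono n)

theorem res_sub {m n : ℕ} {α : List ℕ+} {p : C × Option C}
    (h : (τs m).label α = some p) (hp : p.2 ≠ none) (hmn : m ≤ n) (β : List ℕ+) :
    (τs m).label (α ++ β) = (τs n).label (α ++ β) := by
  obtain ⟨p', _, _, hs⟩ := persist τs hmono hmn α p h
  exact hs hp β

theorem res_persist' {m n : ℕ} {α : List ℕ+} {p : C × Option C}
    (h : (τs m).label α = some p) (hp : p.2 ≠ none) (hmn : m ≤ n) :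
    (τs n).label α = some p := by
  have h0 := res_sub τs hmono h hp hmn []
  rw [List.append_nil] at h0
  rw [← h0, h]

theorem conf_agree {m n : ℕ} {α : List ℕ+} {p q : C × Option C}
    (h1 : (τs m).label α = some p) (h2 : (τs n).label α = some q) : p.1 = q.1 := by
  rcases le_total m n with h | h
  · obtain ⟨p', h', hc, _⟩ := persist τs hmono h α p h1
    rw [h2] at h'
    rw [hc, Option.some_inj.mp h']
  · obtain ⟨q', h', hc, _⟩ := persist τs hmono h α q h2
    rw [h1] at h'
    rw [hc, Option.some_inj.mp h']

theorem some_res_agree {m n : ℕ} {α : List ℕ+} {p q : C × Option C}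
    (h1 : (τs m).label α = some p) (hp : p.2 ≠ none)
    (h2 : (τs n).label α = some q) (hq : q.2 ≠ none) : p = q := by
  have a := res_persist' τs hmono h1 hp (le_max_left m n)
  have b := res_persist' τs hmono h2 hq (le_max_right m n)
  rw [a] at b
  exact Option.some_inj.mp b

theorem lim_eq_of_res {n : ℕ} {α : List ℕ+} {p : C × Option C}
    (h : (τs n).label α = some p) (hp : p.2 ≠ none) :
    limLabel τs α = some p := by
  have hex : ∃ m q, (τs m).label α = some q ∧ q.2 ≠ none := ⟨n, p, h, hp⟩
  unfold limLabel
  rw [dif_pos hex]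
  obtain ⟨h', hne'⟩ := hex.choose_spec.choose_spec
  rw [some_res_agree τs hmono h' hne' h hp]

theorem lim_eq_of_none {n : ℕ} {α : List ℕ+} {p : C × Option C}
    (h : (τs n).label α = some p)
    (hall : ∀ m q, (τs m).label α = some q → q.2 = none) :
    limLabel τs α = some (p.1, (none : Option C)) := by
  have hnex : ¬ ∃ m q, (τs m).label α = some q ∧ q.2 ≠ none := by
    rintro ⟨m, q, hq, hne⟩
    exact hne (hall m q hq)
  have hex2 : ∃ m q, (τs m).label α = some q := ⟨n, p, h⟩
  unfold limLabel
  rw [dif_neg hnex, dif_pos hex2]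
  rw [conf_agree τs hmono hex2.choose_spec.choose_spec h]

theorem lim_eq_none {α : List ℕ+} (hall : ∀ m, (τs m).label α = none) :
    limLabel τs α = none := by
  unfold limLabel
  rw [dif_neg, dif_neg]
  · rintro ⟨m, q, hq⟩
    rw [hall m] at hq
    cases hq
  · rintro ⟨m, q, hq, _⟩
    rw [hall m] at hq
    cases hq

theorem lim_spec {α : List ℕ+} {q : C × Option C} (h : limLabel τs α = some q) :
    ∃ n p, (τs n).label α = some p ∧ p.1 = q.1 ∧ (q.2 ≠ none → p = q) := by
  unfold limLabel at h
  split_ifs at h with h1 h2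
  · obtain ⟨hl, hne⟩ := h1.choose_spec.choose_spec
    have hq : h1.choose_spec.choose = q := Option.some_inj.mp h
    exact ⟨h1.choose, _, hl, by rw [hq], fun _ => hq⟩
  · have hq : (h2.choose_spec.choose.1, (none : Option C)) = q := Option.some_inj.mp h
    refine ⟨h2.choose, h2.choose_spec.choose, h2.choose_spec.choose_spec, ?_, ?_⟩
    · rw [← hq]
    · intro hne
      exact absurd (hq ▸ rfl) hne

theorem lim_defined {n : ℕ} {α : List ℕ+} {p : C × Option C}
    (h : (τs n).label α = some p) :
    ∃ q, limLabel τs α = some q ∧ q.1 = p.1 := by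
  by_cases hx : ∃ m q, (τs m).label α = some q ∧ q.2 ≠ none
  · obtain ⟨m, q, hq, hne⟩ := hx
    exact ⟨q, lim_eq_of_res τs hmono hq hne, conf_agree τs hmono hq h⟩
  · push_neg at hx
    exact ⟨(p.1, none), lim_eq_of_none τs hmono h (fun m q hq => hx m q hq), rfl⟩

/-- The limit tree of an increasing sequence. -/
noncomputable def limTree : PTree C where
  label := limLabel τs
  root_def := by
    obtain ⟨p, hp⟩ := Option.ne_none_iff_exists'.mp (τs 0).root_def
    obtain ⟨q, hq, _⟩ := lim_defined τs hmono hp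
    rw [hq]
    exact Option.some_ne_none _
  closed := by
    intro α n h
    obtain ⟨q, hq⟩ := Option.ne_none_iff_exists'.mp h
    obtain ⟨m, p, hp, _⟩ := lim_spec τs hmono hq
    obtain ⟨p0, hp0⟩ := Option.ne_none_iff_exists'.mp
      ((τs m).closed α n (by rw [hp]; exact Option.some_ne_none _))
    obtain ⟨q0, hq0, _⟩ := lim_defined τs hmono hp0
    rw [hq0]
    exact Option.some_ne_none _
  siblings := by
    intro α n k hk h
    obtain ⟨q, hq⟩ := Option.ne_none_iff_exists'.mp h
    obtain ⟨m, p, hp, _⟩ := lim_spec τs hmono hq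
    obtain ⟨p0, hp0⟩ := Option.ne_none_iff_exists'.mp
      ((τs m).siblings α n k hk (by rw [hp]; exact Option.some_ne_none _))
    obtain ⟨q0, hq0, _⟩ := lim_defined τs hmono hp0
    rw [hq0]
    exact Option.some_ne_none _

theorem le_lim (n : ℕ) : PTree.LE (τs n) (limTree τs hmono) := by
  intro α p hp
  by_cases hp2 : p.2 = none
  · obtain ⟨q, hq, hq1⟩ := lim_defined τs hmono hp
    exact ⟨q, hq, hq1.symm, fun h _ => absurd hp2 h⟩
  · refine ⟨p, lim_eq_of_res τs hmono hp hp2, rfl, fun _ β => ?_⟩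
    show (τs n).label (α ++ β) = limLabel τs (α ++ β)
    cases hc : (τs n).label (α ++ β) with
    | none =>
      symm
      apply lim_eq_none τs hmono
      intro m
      rcases le_total m n with h | h
      · by_contra hne
        obtain ⟨q, hq⟩ := Option.ne_none_iff_exists'.mp hne
        obtain ⟨q', hq', _⟩ := persist τs hmono h (α ++ β) q hq
        rw [hc] at hq'
        cases hq'
      · rw [← res_sub τs hmono hp hp2 h β, hc]
    | some q =>
      by_cases hq2 : q.2 = none
      · have hall : ∀ m q', (τs m).label (α ++ β) = some q' → q'.2 = none := by
          intro m q' hq'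
          by_contra hne
          have h1 := res_persist' τs hmono hq' hne (le_max_left m n)
          have h2 := res_sub τs hmono hp hp2 (le_max_right m n) β
          rw [hc] at h2
          rw [h1] at h2
          rw [Option.some_inj.mp h2] at hq2
          exact hne hq2
        rw [lim_eq_of_none τs hmono hc hall]
        exact congrArg some (Prod.ext rfl hq2)
      · rw [lim_eq_of_res τs hmono hc hq2]

end LimitAux

/-- Proposition `tree-ord` (2): every increasing sequence of trees
(with respect to `⊑`) has a least upper bound. -/
theorem statement11 {C : Type u} (S : BigStep C) (τs : ℕ → PTree C)
    (hmono : ∀ n : ℕ, PTree.LE (τs n) (τs (n + 1))) :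
    ∃ τ : PTree C, (∀ n : ℕ, PTree.LE (τs n) τ) ∧
      ∀ τ' : PTree C, (∀ n : ℕ, PTree.LE (τs n) τ') → PTree.LE τ τ' := by
  refine ⟨limTree τs hmono, le_lim τs hmono, fun τ' hub => ?_⟩
  intro α q hq
  obtain ⟨n, p, hp, hc, himp⟩ := lim_spec τs hmono (show limLabel τs α = some q from hq)
  obtain ⟨p', hp', hc', hs'⟩ := hub n α p hp
  refine ⟨p', hp', hc.symm.trans hc', fun hq2 β => ?_⟩
  have hpq : p = q := himp hq2
  have hp2 : p.2 ≠ none := hpq ▸ hq2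
  obtain ⟨pp, _, _, hsl⟩ := le_lim τs hmono n α p hp
  rw [← hsl hp2 β]
  exact hs' hp2 β

end BigStepMeta
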